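/- Multiplicativity of torsion for short exact sequences (real case): Let (C'_•, ∂') and (C''_•, ∂'') be acyclic bounded chain complexes of finite-dimensional real vector spaces indexed by 0 ≤ i ≤ n. Let f_i : C''_i → C'_{i−1} be linear maps, set C_i := C'_i × C''_i, and define ∂_i(x, y) := (∂'_i x + f_i y, ∂''_i y); assume ∂ ∘ ∂ = 0 (so C_• is a chain complex, which is then acyclic, and the inclusions C'_i → C_i and projections C_i → C''_i are chain maps forming a degreewise-split short exact sequence). Let κ', κ'', κ be chain contractions of C', C'', C respectively, each satisfying κ∘κ = 0. Then, under the canonical identification C_even ≅ C'_even × C''_even and C_odd ≅ C'_odd × C''_odd, the endomorphism of C_even given by ((∂'+κ')_{odd→even} × (∂''+κ'')_{odd→even}) ∘ (∂+κ)_{even→odd} has determinant of absolute value 1. -/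

import Mathlib

open Polynomial in
theorem aux_det_one_add_nilpotent {W : Type*} [AddCommGroup W] [Module ℝ W]
    [FiniteDimensional ℝ W] (N : W →ₗ[ℝ] W) (h : IsNilpotent N) :
    LinearMap.det (LinearMap.id + N) = 1 := by
  classical
  set b := Module.finBasis ℝ W
  set A := LinearMap.toMatrixAlgEquiv b N with hA
  have hAn : IsNilpotent A := h.map (LinearMap.toMatrixAlgEquiv b)
  have hchar : A.charpoly = X ^ (Module.finrank ℝ W) := by
    have h0 : A.charpoly - X ^ (Fintype.card (Fin (Module.finrank ℝ W))) = 0 :=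
      (Matrix.isNilpotent_charpoly_sub_pow_of_isNilpotent hAn).eq_zero
    simpa [Fintype.card_fin, sub_eq_zero] using h0
  have heval2 : (A.charpoly).eval (-1 : ℝ) = (Matrix.scalar _ (-1 : ℝ) - A).det := by
    rw [Matrix.charpoly, _root_.eval_det, Matrix.matPolyEquiv_charmatrix]
    simp
  have hneg : (Matrix.scalar _ (-1 : ℝ) - A) = -(1 + A) := by
    ext i j
    by_cases hij : i = j <;>
      simp [Matrix.scalar_apply, Matrix.one_apply, Matrix.diagonal_apply, hij] <;> ring
  rw [hneg, Matrix.det_neg, hchar] at heval2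
  simp only [eval_pow, eval_neg, eval_one, eval_X, Fintype.card_fin] at heval2
  have hdet : LinearMap.det (LinearMap.id + N) = (1 + A).det := by
    rw [← LinearMap.det_toMatrix b]
    congr 1
    simp [hA, LinearMap.toMatrixAlgEquiv, map_add, LinearMap.toMatrix_id]
  have hpow : ((-1 : ℝ) ^ Module.finrank ℝ W) ≠ 0 := by positivity
  rw [hdet]
  field_simp at heval2 ⊢
  nlinarith [heval2, sq_nonneg ((-1:ℝ) ^ Module.finrank ℝ W)]

theorem aux_iSup_map {V W : Type*} [AddCommGroup V] [Module ℝ V] [AddCommGroup W] [Module ℝ W]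
    (C : ℕ → Submodule ℝ V) (P : ℕ → Prop) (Q : Submodule ℝ W) (T : V →ₗ[ℝ] W)
    (hT : ∀ i, P i → ∀ x ∈ C i, T x ∈ Q) :
    ∀ x ∈ ⨆ i ∈ {i : ℕ | P i}, C i, T x ∈ Q := by
  intro x hx
  refine Submodule.iSup_induction (motive := fun x => T x ∈ Q)
    (fun i => ⨆ _ : i ∈ {i : ℕ | P i}, C i) hx ?_ (by simp) ?_
  · intro i y hy
    simp only [Set.mem_setOf_eq] at hy
    by_cases hP : P i
    · rw [iSup_pos hP] at hy; exact hT i hP y hy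
    · rw [iSup_neg hP] at hy
      simp only [Submodule.mem_bot] at hy
      simp [hy]
  · intro y z hy hz
    rw [map_add]; exact Q.add_mem hy hz

theorem aux_iSup_map' {V W : Type*} [AddCommGroup V] [Module ℝ V] [AddCommGroup W] [Module ℝ W]
    (C : ℕ → Submodule ℝ V) (Q : Submodule ℝ W) (T : V →ₗ[ℝ] W)
    (hT : ∀ i, ∀ x ∈ C i, T x ∈ Q) :
    ∀ x ∈ ⨆ i, C i, T x ∈ Q := by
  intro x hx
  refine Submodule.iSup_induction (motive := fun x => T x ∈ Q) C hx hT (by simp) ?_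
  intro y z hy hz
  rw [map_add]; exact Q.add_mem hy hz

/-- Multiplicativity of torsion for degreewise-split short exact sequences (real case).
The acyclic bounded complexes `C'` and `C''` are encoded as internal gradings
`C₁ : ℕ → Submodule ℝ V₁`, `C₂ : ℕ → Submodule ℝ V₂` of ambient spaces (trivial above
degree `n`), with differentials `d₁, d₂` lowering degree by one; acyclicity reads
`ker d = range d`.  Given a degree-lowering map `f : C'' → C'[-1]`, the product complex
has differential `D(x, y) = (d₁ x + f y, d₂ y)`, assumed to square to zero.  Given chain
contractions `k₁, k₂, K` of the three complexes, each squaring to zero, the endomorphism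
`((∂'+κ')_{odd→even} × (∂''+κ'')_{odd→even}) ∘ (∂+κ)_{even→odd}` of
`C_even ≅ C'_even × C''_even` has determinant of absolute value `1`. -/
theorem torsion_multiplicative_ses {V₁ V₂ : Type*}
    [AddCommGroup V₁] [Module ℝ V₁] [FiniteDimensional ℝ V₁]
    [AddCommGroup V₂] [Module ℝ V₂] [FiniteDimensional ℝ V₂]
    (n : ℕ) (C₁ : ℕ → Submodule ℝ V₁) (C₂ : ℕ → Submodule ℝ V₂)
    (hint₁ : DirectSum.IsInternal C₁) (hint₂ : DirectSum.IsInternal C₂)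
    (hb₁ : ∀ i, n < i → C₁ i = ⊥) (hb₂ : ∀ i, n < i → C₂ i = ⊥)
    (d₁ : V₁ →ₗ[ℝ] V₁) (d₂ : V₂ →ₗ[ℝ] V₂)
    (hd₁0 : ∀ x ∈ C₁ 0, d₁ x = 0) (hd₁deg : ∀ i, ∀ x ∈ C₁ (i + 1), d₁ x ∈ C₁ i)
    (hd₁d₁ : d₁ ∘ₗ d₁ = 0) (hacyc₁ : LinearMap.ker d₁ = LinearMap.range d₁)
    (hd₂0 : ∀ x ∈ C₂ 0, d₂ x = 0) (hd₂deg : ∀ i, ∀ x ∈ C₂ (i + 1), d₂ x ∈ C₂ i)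
    (hd₂d₂ : d₂ ∘ₗ d₂ = 0) (hacyc₂ : LinearMap.ker d₂ = LinearMap.range d₂)
    (f : V₂ →ₗ[ℝ] V₁)
    (hf0 : ∀ x ∈ C₂ 0, f x = 0) (hfdeg : ∀ i, ∀ x ∈ C₂ (i + 1), f x ∈ C₁ i)
    (D : V₁ × V₂ →ₗ[ℝ] V₁ × V₂)
    (hD : ∀ x y, D (x, y) = (d₁ x + f y, d₂ y))
    (hDD : D ∘ₗ D = 0)
    (k₁ : V₁ →ₗ[ℝ] V₁) (k₂ : V₂ →ₗ[ℝ] V₂)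
    (hk₁deg : ∀ i, ∀ x ∈ C₁ i, k₁ x ∈ C₁ (i + 1))
    (hk₁ : d₁ ∘ₗ k₁ + k₁ ∘ₗ d₁ = LinearMap.id) (hk₁k₁ : k₁ ∘ₗ k₁ = 0)
    (hk₂deg : ∀ i, ∀ x ∈ C₂ i, k₂ x ∈ C₂ (i + 1))
    (hk₂ : d₂ ∘ₗ k₂ + k₂ ∘ₗ d₂ = LinearMap.id) (hk₂k₂ : k₂ ∘ₗ k₂ = 0)
    (K : V₁ × V₂ →ₗ[ℝ] V₁ × V₂)
    (hKdeg : ∀ i, ∀ v ∈ (C₁ i).prod (C₂ i), K v ∈ (C₁ (i + 1)).prod (C₂ (i + 1)))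
    (hK : D ∘ₗ K + K ∘ₗ D = LinearMap.id) (hKK : K ∘ₗ K = 0) :
    ∃ (h : ∀ v ∈ (⨆ i ∈ {i : ℕ | Even i}, C₁ i).prod (⨆ i ∈ {i : ℕ | Even i}, C₂ i),
        (LinearMap.prodMap (d₁ + k₁) (d₂ + k₂) ∘ₗ (D + K)) v ∈
          (⨆ i ∈ {i : ℕ | Even i}, C₁ i).prod (⨆ i ∈ {i : ℕ | Even i}, C₂ i)),
      |LinearMap.det ((LinearMap.prodMap (d₁ + k₁) (d₂ + k₂) ∘ₗ (D + K)).restrict h)|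
        = 1 := by
  classical
  -- pointwise versions of the algebraic hypotheses
  have hk₁' : ∀ x, d₁ (k₁ x) + k₁ (d₁ x) = x := fun x => congrArg (· x) hk₁ |>.trans rfl
  have hk₂' : ∀ x, d₂ (k₂ x) + k₂ (d₂ x) = x := fun x => congrArg (· x) hk₂ |>.trans rfl
  have hK' : ∀ v, D (K v) + K (D v) = v := fun v => congrArg (· v) hK |>.trans rfl
  have hk₁k₁' : ∀ x, k₁ (k₁ x) = 0 := fun x => congrArg (· x) hk₁k₁
  have hk₂k₂' : ∀ x, k₂ (k₂ x) = 0 := fun x => congrArg (· x) hk₂k₂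
  have hd₁d₁' : ∀ x, d₁ (d₁ x) = 0 := fun x => congrArg (· x) hd₁d₁
  have hd₂d₂' : ∀ x, d₂ (d₂ x) = 0 := fun x => congrArg (· x) hd₂d₂
  have hDD' : ∀ v, D (D v) = 0 := fun v => congrArg (· v) hDD
  have hd₁f : ∀ y, d₁ (f y) + f (d₂ y) = 0 := by
    intro y
    have h0 := hDD' (0, y)
    rw [hD 0 y] at h0
    simp only [map_zero, zero_add] at h0
    rw [hD (f y) (d₂ y)] at h0
    rw [Prod.mk_eq_zero] at h0
    exact h0.1
  -- the auxiliary triangular contraction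
  set g : V₂ →ₗ[ℝ] V₁ := -(k₁ ∘ₗ (f ∘ₗ k₂)) with hgdef
  have hg : ∀ y, g y = -(k₁ (f (k₂ y))) := fun y => rfl
  set K₀ : V₁ × V₂ →ₗ[ℝ] V₁ × V₂ :=
    (LinearMap.prodMap k₁ k₂) + ((LinearMap.inl ℝ V₁ V₂) ∘ₗ (g ∘ₗ (LinearMap.snd ℝ V₁ V₂)))
    with hK₀def
  have hK₀app : ∀ x y, K₀ (x, y) = (k₁ x + g y, k₂ y) := by
    intro x y
    simp [hK₀def, Prod.ext_iff]
  -- the key identity for g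
  have hgmain : ∀ y, d₁ (g y) + g (d₂ y) + k₁ (f y) + f (k₂ y) = 0 := by
    intro y
    have e1 : d₁ (k₁ (f (k₂ y))) = f (k₂ y) - k₁ (d₁ (f (k₂ y))) :=
      eq_sub_of_add_eq (hk₁' (f (k₂ y)))
    have e2 : d₁ (f (k₂ y)) = -f (d₂ (k₂ y)) :=
      eq_neg_of_add_eq_zero_left (hd₁f (k₂ y))
    have e2' : k₁ (d₁ (f (k₂ y))) = -k₁ (f (d₂ (k₂ y))) := by rw [e2, map_neg]
    have e3 : k₂ (d₂ y) = y - d₂ (k₂ y) := eq_sub_of_add_eq' (hk₂' y)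
    have e3' : k₁ (f (k₂ (d₂ y))) = k₁ (f y) - k₁ (f (d₂ (k₂ y))) := by
      rw [e3, map_sub, map_sub]
    rw [hg y, hg (d₂ y), map_neg]
    linear_combination (norm := module) -e1 + e2' - e3'
  -- contraction property of K₀
  have hK₀contr : ∀ v : V₁ × V₂, D (K₀ v) + K₀ (D v) = v := by
    rintro ⟨x, y⟩
    rw [hK₀app x y, hD x y, hD (k₁ x + g y) (k₂ y), hK₀app (d₁ x + f y) (d₂ y),
      Prod.mk_add_mk, Prod.mk.injEq]
    refine ⟨?_, hk₂' y⟩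
    simp only [map_add]
    linear_combination (norm := module) hk₁' x + hgmain y
  -- K₀ squares to zero
  have hK₀K₀ : ∀ v : V₁ × V₂, K₀ (K₀ v) = 0 := by
    rintro ⟨x, y⟩
    rw [hK₀app x y, hK₀app (k₁ x + g y) (k₂ y), Prod.mk_eq_zero]
    refine ⟨?_, hk₂k₂' y⟩
    have z2 : k₁ (k₁ (f (k₂ y))) = 0 := hk₁k₁' (f (k₂ y))
    have e : k₁ (f (k₂ (k₂ y))) = 0 := by rw [hk₂k₂' y, map_zero, map_zero]
    rw [map_add, hg y, hg (k₂ y), map_neg]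
    linear_combination (norm := module) hk₁k₁' x - z2 - e
  -- A₀ := D + K₀ is an involution
  have hA₀A₀ : ∀ v : V₁ × V₂, (D + K₀) ((D + K₀) v) = v := by
    intro v
    simp only [LinearMap.add_apply, map_add]
    linear_combination (norm := module) hDD' v + hK₀K₀ v + hK₀contr v
  -- the unipotent factors
  set S : V₁ × V₂ →ₗ[ℝ] V₁ × V₂ := (K₀ - K) ∘ₗ D with hSdef
  set T : V₁ × V₂ →ₗ[ℝ] V₁ × V₂ := K₀ ∘ₗ K with hTdef
  set L : V₁ × V₂ →ₗ[ℝ] V₁ × V₂ := S + T with hLdef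
  have hSapp : ∀ v, S v = K₀ (D v) - K (D v) := by
    intro v; simp [hSdef]
  have hTapp : ∀ v, T v = K₀ (K v) := fun v => rfl
  have hLapp : ∀ v, L v = S v + T v := fun v => rfl
  -- A₀ ∘ A = 1 + L
  have hA₀A : ∀ v : V₁ × V₂, (D + K₀) ((D + K) v) = v + L v := by
    intro v
    simp only [LinearMap.add_apply, map_add]
    rw [hLapp v, hSapp v, hTapp v]
    have hDK : D (K v) = v - K (D v) := eq_sub_of_add_eq (hK' v)
    rw [hDK, hDD' v]
    abel
  -- S squares to zero
  have hSS : ∀ v, S (S v) = 0 := by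
    intro v
    have hDS : D (S v) = 0 := by
      rw [hSapp v, map_sub]
      have h1 : D (K₀ (D v)) = D v - K₀ (D (D v)) := eq_sub_of_add_eq (hK₀contr (D v))
      have h2 : D (K (D v)) = D v - K (D (D v)) := eq_sub_of_add_eq (hK' (D v))
      rw [h1, h2, hDD' v, map_zero, map_zero]
      abel
    rw [hSapp (S v), hDS, map_zero, map_zero, sub_zero]
  -- w and L'
  set w : V₂ →ₗ[ℝ] V₁ := (d₁ + k₁) ∘ₗ (f + g) with hwdef
  have hwapp : ∀ y, w y = d₁ (f y) + d₁ (g y) + (k₁ (f y) + k₁ (g y)) := by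
    intro y
    simp only [hwdef, LinearMap.comp_apply, LinearMap.add_apply, map_add]
    abel
  set L' : V₁ × V₂ →ₗ[ℝ] V₁ × V₂ :=
    (LinearMap.inl ℝ V₁ V₂) ∘ₗ (w ∘ₗ (LinearMap.snd ℝ V₁ V₂)) with hL'def
  have hL'app : ∀ x y, L' (x, y) = (w y, 0) := fun x y => rfl
  have hL'L' : ∀ v, L' (L' v) = 0 := by
    rintro ⟨x, y⟩
    rw [hL'app x y, hL'app (w y) 0, map_zero, Prod.mk_eq_zero]
    exact ⟨rfl, rfl⟩
  -- B ∘ A₀ = 1 + L'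
  have hBA₀ : ∀ v : V₁ × V₂, (LinearMap.prodMap (d₁ + k₁) (d₂ + k₂)) ((D + K₀) v)
      = v + L' v := by
    rintro ⟨x, y⟩
    have hA₀app : (D + K₀) (x, y) = (d₁ x + f y + (k₁ x + g y), d₂ y + k₂ y) := by
      rw [LinearMap.add_apply, hD x y, hK₀app x y, Prod.mk_add_mk]
    rw [hA₀app, hL'app x y, LinearMap.prodMap_apply, Prod.mk_add_mk, Prod.mk.injEq]
    constructor
    · simp only [LinearMap.add_apply, map_add]
      rw [hwapp y]
      linear_combination (norm := module) hd₁d₁' x + hk₁k₁' x + hk₁' x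
    · simp only [LinearMap.add_apply, map_add]
      linear_combination (norm := module) hd₂d₂' y + hk₂k₂' y + hk₂' y
  -- the factorization B ∘ A = (1 + L') ∘ (1 + L)
  have hfact : ∀ v : V₁ × V₂, (LinearMap.prodMap (d₁ + k₁) (d₂ + k₂)) ((D + K) v)
      = ((LinearMap.id + L' : V₁ × V₂ →ₗ[ℝ] V₁ × V₂))
          (((LinearMap.id + L : V₁ × V₂ →ₗ[ℝ] V₁ × V₂)) v) := by
    intro v
    have h1 : ((LinearMap.id + L : V₁ × V₂ →ₗ[ℝ] V₁ × V₂)) v = (D + K₀) ((D + K) v) := by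
      rw [hA₀A v]; simp
    have h2 : ((LinearMap.id + L' : V₁ × V₂ →ₗ[ℝ] V₁ × V₂)) ((D + K₀) ((D + K) v)) =
        (LinearMap.prodMap (d₁ + k₁) (d₂ + k₂)) ((D + K₀) ((D + K₀) ((D + K) v))) := by
      rw [hBA₀ ((D + K₀) ((D + K) v))]; simp
    rw [h1, h2, hA₀A₀ ((D + K) v)]
  -- grading setup
  set E₁ : Submodule ℝ V₁ := ⨆ i ∈ {i : ℕ | Even i}, C₁ i with hE₁def
  set E₂ : Submodule ℝ V₂ := ⨆ i ∈ {i : ℕ | Even i}, C₂ i with hE₂def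
  set Cp : ℕ → Submodule ℝ (V₁ × V₂) := fun i => (C₁ i).prod (C₂ i) with hCpdef
  set Ep : Submodule ℝ (V₁ × V₂) := ⨆ i ∈ {i : ℕ | Even i}, Cp i with hEpdef
  have hpiece₁ : ∀ j, Even j → C₁ j ≤ E₁ := fun j hj => le_biSup _ hj
  have hpiece₂ : ∀ j, Even j → C₂ j ≤ E₂ := fun j hj => le_biSup _ hj
  have hpieceCp : ∀ j, Even j → Cp j ≤ Ep := fun j hj => le_biSup _ hj
  have hCpmem : ∀ i (v : V₁ × V₂), v ∈ Cp i ↔ (v.1 ∈ C₁ i ∧ v.2 ∈ C₂ i) := by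
    intro i v; rw [hCpdef]; exact Submodule.mem_prod
  have hEple : Ep ≤ E₁.prod E₂ := by
    rw [hEpdef]
    refine iSup₂_le fun i hi => ?_
    rw [hCpdef]
    intro v hv
    rw [Submodule.mem_prod] at hv ⊢
    exact ⟨hpiece₁ i hi hv.1, hpiece₂ i hi hv.2⟩
  have hEsub : ∀ v ∈ E₁.prod E₂, v ∈ Ep := by
    rintro ⟨x, y⟩ hv
    rw [Submodule.mem_prod] at hv
    obtain ⟨hx, hy⟩ := hv
    have h1 : ((x, 0) : V₁ × V₂) ∈ Ep := by
      rw [hE₁def] at hx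
      refine aux_iSup_map C₁ Even Ep (LinearMap.inl ℝ V₁ V₂) ?_ x hx
      intro i hi z hz
      exact hpieceCp i hi ((hCpmem i _).mpr ⟨hz, (C₂ i).zero_mem⟩)
    have h2 : ((0, y) : V₁ × V₂) ∈ Ep := by
      rw [hE₂def] at hy
      refine aux_iSup_map C₂ Even Ep (LinearMap.inr ℝ V₁ V₂) ?_ y hy
      intro i hi z hz
      exact hpieceCp i hi ((hCpmem i _).mpr ⟨(C₁ i).zero_mem, hz⟩)
    have hxy : ((x, y) : V₁ × V₂) = (x, 0) + (0, y) := by simp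
    rw [hxy]
    exact Ep.add_mem h1 h2
  -- degree shifts
  have hDdeg' : ∀ i, ∀ v ∈ Cp (i + 1), D v ∈ Cp i := by
    rintro i ⟨x, y⟩ hv
    rw [hCpmem] at hv
    rw [hD x y, hCpmem]
    exact ⟨add_mem (hd₁deg i x hv.1) (hfdeg i y hv.2), hd₂deg i y hv.2⟩
  have hD0' : ∀ v ∈ Cp 0, D v = 0 := by
    rintro ⟨x, y⟩ hv
    rw [hCpmem] at hv
    rw [hD x y, hd₁0 x hv.1, hf0 y hv.2, hd₂0 y hv.2, add_zero, Prod.mk_eq_zero]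
    exact ⟨rfl, rfl⟩
  have hgdeg : ∀ i, ∀ y ∈ C₂ i, g y ∈ C₁ (i + 1) := by
    intro i y hy
    rw [hg y]
    exact neg_mem (hk₁deg i _ (hfdeg i _ (hk₂deg i y hy)))
  have hK₀deg : ∀ i, ∀ v ∈ Cp i, K₀ v ∈ Cp (i + 1) := by
    rintro i ⟨x, y⟩ hv
    rw [hCpmem] at hv
    rw [hK₀app x y, hCpmem]
    exact ⟨add_mem (hk₁deg i x hv.1) (hgdeg i y hv.2), hk₂deg i y hv.2⟩
  have hKdeg' : ∀ i, ∀ v ∈ Cp i, K v ∈ Cp (i + 1) := by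
    intro i v hv
    have := hKdeg i v (by rw [hCpdef] at hv; exact hv)
    rw [hCpdef]
    exact this
  have hSdeg : ∀ i, ∀ v ∈ Cp i, S v ∈ Cp i := by
    rintro (_ | j) v hv
    · rw [hSapp v, hD0' v hv, map_zero, map_zero, sub_self]
      exact (Cp 0).zero_mem
    · rw [hSapp v]
      exact sub_mem (hK₀deg j _ (hDdeg' j v hv)) (hKdeg' j _ (hDdeg' j v hv))
  have hTdeg : ∀ i, ∀ v ∈ Cp i, T v ∈ Cp (i + 2) := by
    intro i v hv
    rw [hTapp v]
    exact hK₀deg (i + 1) _ (hKdeg' i v hv)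
  -- L preserves the even part
  have hLE : ∀ v ∈ E₁.prod E₂, L v ∈ E₁.prod E₂ := by
    intro v hv
    apply hEple
    have hv' : v ∈ ⨆ i ∈ {i : ℕ | Even i}, Cp i := by
      rw [← hEpdef]; exact hEsub v hv
    refine aux_iSup_map Cp Even Ep L ?_ v hv'
    intro i hi u hu
    rw [hLapp u]
    exact Ep.add_mem (hpieceCp i hi (hSdeg i u hu))
      (hpieceCp (i + 2) (by rcases hi with ⟨t, ht⟩; exact ⟨t + 1, by omega⟩) (hTdeg i u hu))
  -- L' preserves the even part
  have hwE : ∀ y ∈ E₂, w y ∈ E₁ := by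
    intro y hy
    rw [hE₂def] at hy
    refine aux_iSup_map C₂ Even E₁ w ?_ y hy
    intro i hi z hz
    rw [hwapp z]
    have hgz : g z ∈ C₁ (i + 1) := hgdeg i z hz
    have h2 : d₁ (g z) ∈ C₁ i := hd₁deg i _ hgz
    have h3 : k₁ (g z) ∈ C₁ (i + 2) := hk₁deg (i + 1) _ hgz
    have hi2 : Even (i + 2) := by rcases hi with ⟨t, ht⟩; exact ⟨t + 1, by omega⟩
    have hfd : d₁ (f z) ∈ E₁ ∧ k₁ (f z) ∈ E₁ := by
      rcases i with _ | j
      · rw [hf0 z hz, map_zero, map_zero]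
        exact ⟨E₁.zero_mem, E₁.zero_mem⟩
      · have hfz : f z ∈ C₁ j := hfdeg j z hz
        constructor
        · rcases j with _ | m
          · rw [hd₁0 _ hfz]; exact E₁.zero_mem
          · refine hpiece₁ m ?_ (hd₁deg m _ hfz)
            rcases hi with ⟨t, ht⟩; exact ⟨t - 1, by omega⟩
        · exact hpiece₁ _ hi (hk₁deg j _ hfz)
    exact add_mem (add_mem hfd.1 (hpiece₁ i hi h2)) (add_mem hfd.2 (hpiece₁ _ hi2 h3))
  have hL'E : ∀ v ∈ E₁.prod E₂, L' v ∈ E₁.prod E₂ := by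
    rintro ⟨x, y⟩ hv
    rw [Submodule.mem_prod] at hv
    rw [hL'app x y, Submodule.mem_prod]
    exact ⟨hwE y hv.2, E₂.zero_mem⟩
  -- nilpotency of L
  set Qf : ℕ → Submodule ℝ (V₁ × V₂) := fun k => ⨆ i ∈ {i : ℕ | k ≤ i}, Cp i with hQfdef
  have hQpiece : ∀ k j, k ≤ j → Cp j ≤ Qf k := fun k j h => le_biSup _ h
  have hQ0 : ∀ v : V₁ × V₂, v ∈ Qf 0 := by
    rintro ⟨x, y⟩
    have hx : x ∈ ⨆ i, C₁ i := by
      rw [hint₁.submodule_iSup_eq_top]; trivial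
    have hy : y ∈ ⨆ i, C₂ i := by
      rw [hint₂.submodule_iSup_eq_top]; trivial
    have h1 : ((x, 0) : V₁ × V₂) ∈ Qf 0 := by
      refine aux_iSup_map' C₁ (Qf 0) (LinearMap.inl ℝ V₁ V₂) ?_ x hx
      intro i z hz
      exact hQpiece 0 i (Nat.zero_le i) ((hCpmem i _).mpr ⟨hz, (C₂ i).zero_mem⟩)
    have h2 : ((0, y) : V₁ × V₂) ∈ Qf 0 := by
      refine aux_iSup_map' C₂ (Qf 0) (LinearMap.inr ℝ V₁ V₂) ?_ y hy
      intro i z hz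
      exact hQpiece 0 i (Nat.zero_le i) ((hCpmem i _).mpr ⟨(C₁ i).zero_mem, hz⟩)
    have hxy : ((x, y) : V₁ × V₂) = (x, 0) + (0, y) := by simp
    rw [hxy]
    exact (Qf 0).add_mem h1 h2
  have hstep : ∀ k, ∀ v ∈ Qf k, (L ∘ₗ L) v ∈ Qf (k + 2) := by
    intro k v hv
    rw [hQfdef] at hv
    refine aux_iSup_map Cp (fun i => k ≤ i) (Qf (k + 2)) (L ∘ₗ L) ?_ v hv
    intro i hik u hu
    rw [LinearMap.comp_apply, hLapp u, map_add, hLapp (S u), hLapp (T u), hSS u, zero_add]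
    exact add_mem (hQpiece (k + 2) (i + 2) (by omega) (hTdeg i _ (hSdeg i u hu)))
      (add_mem (hQpiece (k + 2) (i + 2) (by omega) (hSdeg (i + 2) _ (hTdeg i u hu)))
        (hQpiece (k + 2) (i + 4) (by omega) (hTdeg (i + 2) _ (hTdeg i u hu))))
  have hQbot : ∀ v ∈ Qf (n + 1), v = 0 := by
    intro v hv
    have hle : Qf (n + 1) ≤ ⊥ := by
      rw [hQfdef]
      refine iSup₂_le fun i hi => ?_
      have : Cp i = ⊥ := by
        show (C₁ i).prod (C₂ i) = ⊥
        rw [hb₁ i (by exact hi), hb₂ i (by exact hi)]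
        ext ⟨a, b⟩
        simp [Submodule.mem_prod, Prod.ext_iff]
      rw [this]
    simpa using hle hv
  have hLLpow : ∀ (m : ℕ) (v : V₁ × V₂), ((L ∘ₗ L) ^ m) v ∈ Qf (2 * m) := by
    intro m
    induction m with
    | zero => intro v; simpa using hQ0 v
    | succ m ih =>
      intro v
      rw [pow_succ', Module.End.mul_apply, show 2 * (m + 1) = 2 * m + 2 from by ring]
      exact hstep (2 * m) _ (ih v)
  have hLL0 : (L ∘ₗ L) ^ (n + 1) = 0 := by
    apply LinearMap.ext
    intro v
    rw [LinearMap.zero_apply]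
    apply hQbot
    have hmono : Qf (2 * (n + 1)) ≤ Qf (n + 1) := by
      rw [hQfdef]
      refine iSup₂_le fun i hi => hQpiece (n + 1) i (by simp only [Set.mem_setOf_eq] at hi; omega)
    exact hmono (hLLpow (n + 1) v)
  have hLpow0 : L ^ (2 * (n + 1)) = 0 := by
    rw [pow_mul]
    have h2 : L ^ 2 = L ∘ₗ L := by rw [pow_two, Module.End.mul_eq_comp]
    rw [h2, hLL0]
  -- the map preserves the even part
  have hPE : ∀ v ∈ E₁.prod E₂, ((LinearMap.id + L : V₁ × V₂ →ₗ[ℝ] V₁ × V₂)) v ∈ E₁.prod E₂ := by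
    intro v hv
    rw [LinearMap.add_apply, LinearMap.id_apply]
    exact add_mem hv (hLE v hv)
  have hP'E : ∀ v ∈ E₁.prod E₂, ((LinearMap.id + L' : V₁ × V₂ →ₗ[ℝ] V₁ × V₂)) v ∈ E₁.prod E₂ := by
    intro v hv
    rw [LinearMap.add_apply, LinearMap.id_apply]
    exact add_mem hv (hL'E v hv)
  have hME : ∀ v ∈ E₁.prod E₂,
      (LinearMap.prodMap (d₁ + k₁) (d₂ + k₂) ∘ₗ (D + K)) v ∈ E₁.prod E₂ := by
    intro v hv
    rw [LinearMap.comp_apply, hfact v]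
    exact hP'E _ (hPE v hv)
  refine ⟨hME, ?_⟩
  have heq : (LinearMap.prodMap (d₁ + k₁) (d₂ + k₂) ∘ₗ (D + K)).restrict hME =
      ((LinearMap.id + L' : V₁ × V₂ →ₗ[ℝ] V₁ × V₂).restrict hP'E) ∘ₗ
        ((LinearMap.id + L : V₁ × V₂ →ₗ[ℝ] V₁ × V₂).restrict hPE) := by
    apply LinearMap.ext
    intro v
    apply Subtype.ext
    simp only [LinearMap.comp_apply, LinearMap.restrict_coe_apply]
    exact hfact v
  rw [heq, LinearMap.det_comp]
  have hd1 : LinearMap.det ((LinearMap.id + L' : V₁ × V₂ →ₗ[ℝ] V₁ × V₂).restrict hP'E) = 1 := by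
    have hres : (LinearMap.id + L' : V₁ × V₂ →ₗ[ℝ] V₁ × V₂).restrict hP'E =
        LinearMap.id + (L'.restrict hL'E) := by
      apply LinearMap.ext
      intro v
      apply Subtype.ext
      simp [LinearMap.restrict_coe_apply]
    rw [hres]
    apply aux_det_one_add_nilpotent
    refine ⟨2, ?_⟩
    apply LinearMap.ext
    intro v
    apply Subtype.ext
    rw [pow_two, Module.End.mul_apply]
    simp only [LinearMap.restrict_coe_apply, LinearMap.zero_apply, ZeroMemClass.coe_zero]
    exact hL'L' v
  have hrespow : ∀ (m : ℕ) (v : E₁.prod E₂),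
      ((((L.restrict hLE)) ^ m) v : V₁ × V₂) = (L ^ m) (v : V₁ × V₂) := by
    intro m
    induction m with
    | zero => intro v; simp
    | succ m ih =>
      intro v
      rw [pow_succ, pow_succ, Module.End.mul_apply, Module.End.mul_apply]
      rw [ih ((L.restrict hLE) v)]
      congr 1
  have hd0 : LinearMap.det ((LinearMap.id + L : V₁ × V₂ →ₗ[ℝ] V₁ × V₂).restrict hPE) = 1 := by
    have hres : (LinearMap.id + L : V₁ × V₂ →ₗ[ℝ] V₁ × V₂).restrict hPE =
        LinearMap.id + (L.restrict hLE) := by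
      apply LinearMap.ext
      intro v
      apply Subtype.ext
      simp [LinearMap.restrict_coe_apply]
    rw [hres]
    apply aux_det_one_add_nilpotent
    refine ⟨2 * (n + 1), ?_⟩
    apply LinearMap.ext
    intro v
    apply Subtype.ext
    rw [hrespow (2 * (n + 1)) v, hLpow0]
    simp
  rw [hd1, hd0]
  norm_num
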